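/- arXiv:2011.05313 — 2 statements merged into one kernel-verified Lean document; each statement's English description precedes it below -/
import Mathlib

section
/- Let w : ℝ → ℂ be integrable. Define the autocorrelation ŵ(τ) = ∫_ℝ w(t) · conj(w(t − τ)) dt and the Fourier transform W(f) = ∫_ℝ w(t) e^{−2πi f t} dt. Then for every f ∈ ℝ, the energy spectral density of w equals the Fourier transform of its autocorrelation: |W(f)|² = ∫_ℝ ŵ(τ) e^{−2πi f τ} dτ. -/
open MeasureTheory Real ComplexConjugate

/-- The autocorrelation `ŵ(τ) = ∫ w(t) conj(w(t − τ)) dt` of a window function. -/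
noncomputable def autocorrW (w : ℝ → ℂ) (τ : ℝ) : ℂ :=
  ∫ t : ℝ, w t * conj (w (t - τ))

/-- The Fourier transform `ĝ(f) = ∫ g(t) e^{−2πi f t} dt`. -/
noncomputable def fourierT (g : ℝ → ℂ) (f : ℝ) : ℂ :=
  ∫ t : ℝ, g t * Complex.exp (-2 * (π : ℂ) * Complex.I * f * t)

private lemma char_mul_conj_char (f t τ : ℝ) :
    Complex.exp (-2 * (π : ℂ) * Complex.I * f * t) *
      conj (Complex.exp (-2 * (π : ℂ) * Complex.I * f * ((t - τ : ℝ) : ℂ))) =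
      Complex.exp (-2 * (π : ℂ) * Complex.I * f * τ) := by
  rw [← Complex.exp_conj, ← Complex.exp_add]
  congr 1
  push_cast
  simp only [map_mul, map_neg, map_sub, map_ofNat, Complex.conj_I, Complex.conj_ofReal]
  ring

private lemma norm_char (f t : ℝ) :
    ‖Complex.exp (-2 * (π : ℂ) * Complex.I * f * t)‖ = 1 := by
  rw [Complex.norm_exp]
  have : (-2 * (π : ℂ) * Complex.I * f * t).re = 0 := by
    simp [Complex.mul_re, Complex.mul_im]
  rw [this, Real.exp_zero]

/-- The energy spectral density of an integrable window equals the Fourier transform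
of its autocorrelation. -/
theorem esd_eq_fourier_autocorr (w : ℝ → ℂ) (hw : Integrable w) (f : ℝ) :
    ((‖fourierT w f‖ : ℝ) : ℂ) ^ 2 = fourierT (autocorrW w) f := by
  set e : ℝ → ℂ := fun t => Complex.exp (-2 * (π : ℂ) * Complex.I * f * t) with he
  have hce : Continuous e := by
    apply Complex.continuous_exp.comp
    continuity
  -- f₁ := w * e is integrable
  have hf1 : Integrable (fun t => e t * w t) volume :=
    hw.bdd_mul (c := 1) hce.aestronglyMeasurable (Filter.Eventually.of_forall fun t => le_of_eq (norm_char f t))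
  have hf1' : Integrable (fun t => w t * e t) volume := by
    simpa only [mul_comm] using hf1
  -- the double-integral kernel
  set G : ℝ × ℝ → ℂ := fun p => w p.1 * conj (w (p.1 - p.2)) * e p.2 with hG
  -- G = H ∘ φ with H integrable and φ measure preserving
  have hφ : MeasurePreserving (fun p : ℝ × ℝ => (p.1, p.1 - p.2))
      (volume : Measure (ℝ × ℝ)) volume := by
    have h1 : MeasurePreserving (fun p : ℝ × ℝ => (p.1, p.2 - p.1))
        (volume : Measure (ℝ × ℝ)) volume := by
      rw [Measure.volume_eq_prod]
      exact measurePreserving_prod_sub volume volume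
    have h2 : MeasurePreserving (fun p : ℝ × ℝ => (p.1, -p.2))
        (volume : Measure (ℝ × ℝ)) volume := by
      rw [Measure.volume_eq_prod]
      exact (MeasurePreserving.id volume).prod (Measure.measurePreserving_neg volume)
    have := h2.comp h1
    convert this using 1
    ext p <;> simp [neg_sub]
  have hconj : Integrable (fun t => conj (w t * e t)) volume :=
    ⟨RCLike.continuous_conj.comp_aestronglyMeasurable hf1'.1, by
      simpa [HasFiniteIntegral] using hf1'.2⟩
  have hH : Integrable (fun p : ℝ × ℝ => (w p.1 * e p.1) * conj (w p.2 * e p.2)) volume := by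
    rw [Measure.volume_eq_prod]
    exact hf1'.mul_prod hconj
  have hGint : Integrable G volume := by
    have := (hφ.integrable_comp hH.1).2 hH
    apply this.congr
    filter_upwards with p
    show (w p.1 * e p.1) * conj (w (p.1 - p.2) * e (p.1 - p.2)) = G p
    simp only [hG, map_mul]
    calc w p.1 * e p.1 * (conj (w (p.1 - p.2)) * conj (e (p.1 - p.2)))
        = w p.1 * conj (w (p.1 - p.2)) * (e p.1 * conj (e (p.1 - p.2))) := by ring
      _ = w p.1 * conj (w (p.1 - p.2)) * e p.2 := by rw [char_mul_conj_char f p.1 p.2]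
  -- RHS as iterated integral of G
  have hRHS : fourierT (autocorrW w) f = ∫ τ : ℝ, ∫ t : ℝ, G (t, τ) := by
    unfold fourierT autocorrW
    congr 1; ext τ
    rw [← integral_mul_const]
  -- LHS as iterated integral of G (other order)
  have hLHS : ((‖fourierT w f‖ : ℝ) : ℂ) ^ 2 = ∫ t : ℝ, ∫ τ : ℝ, G (t, τ) := by
    have h1 : ((‖fourierT w f‖ : ℝ) : ℂ) ^ 2 = fourierT w f * conj (fourierT w f) := by
      rw [Complex.mul_conj']
    rw [h1]
    unfold fourierT
    rw [← integral_conj, ← integral_mul_const]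
    congr 1; ext t
    rw [← integral_const_mul]
    rw [← integral_sub_left_eq_self (fun s => w t * e t * conj (w s * e s)) volume t]
    congr 1; ext τ
    show w t * e t * conj (w (t - τ) * e (t - τ)) = G (t, τ)
    simp only [hG, map_mul]
    calc w t * e t * (conj (w (t - τ)) * conj (e (t - τ)))
        = w t * conj (w (t - τ)) * (e t * conj (e (t - τ))) := by ring
      _ = w t * conj (w (t - τ)) * e τ := by rw [char_mul_conj_char f t τ]
  rw [hLHS, hRHS]
  rw [Measure.volume_eq_prod] at hGint
  exact integral_integral_swap (f := fun t τ => G (t, τ)) hGint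
end

section
/- Let (Ω, P) be a probability space and x : ℝ × Ω → ℂ jointly measurable with |x(t, ω)| ≤ M almost surely for all t, second-order stationary with autocorrelation x̂(τ) = E[x(t, ·) · conj(x(t − τ, ·))]. Suppose the power spectral density S : ℝ → ℂ is integrable and satisfies the Fourier inversion relation x̂(τ) = ∫_ℝ S(f) e^{2πi f τ} df for all τ. Let w : ℝ → ℂ be integrable with |w| also square-integrable, W(f) = ∫_ℝ w(t) e^{−2πi f t} dt, and y(t, ω) = w(t) · x(t, ω) with Y(f, ω) = ∫_ℝ y(t, ω) e^{−2πi f t} dt. Then for every f ∈ ℝ, E[|Y(f, ·)|²] = ∫_ℝ S(f − f′) · |W(f′)|² df′; that is, the expected energy spectral density of the windowed random signal is the convolution of the power spectral density S of the signal with the energy spectral density |W|² of the window. -/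
open MeasureTheory Real ComplexConjugate


private lemma hsq (z : ℂ) : ((‖z‖ ^ 2 : ℝ) : ℂ) = z * conj z := by
  rw [Complex.mul_conj]
  norm_cast
  rw [Complex.sq_norm]

private lemma expI_norm (r : ℝ) : ‖Complex.exp ((r : ℂ) * Complex.I)‖ = 1 := by
  rw [Complex.norm_exp_ofReal_mul_I]

private lemma exp_norm_one (a b : ℝ) :
    ‖Complex.exp (-2 * (π : ℂ) * Complex.I * a * b)‖ = 1 := by
  have h : (-2 * (π : ℂ) * Complex.I * a * b) = ((-2 * π * a * b : ℝ) : ℂ) * Complex.I := by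
    push_cast; ring
  rw [h, expI_norm]

private lemma exp_norm_one' (a b : ℝ) :
    ‖Complex.exp (2 * (π : ℂ) * Complex.I * a * b)‖ = 1 := by
  have h : (2 * (π : ℂ) * Complex.I * a * b) = ((2 * π * a * b : ℝ) : ℂ) * Complex.I := by
    push_cast; ring
  rw [h, expI_norm]

private lemma mul_bdd_int {α : Type*} [MeasurableSpace α] {μ : Measure α} {g h : α → ℂ}
    (hg : Integrable g μ) (hm : AEStronglyMeasurable h μ) {C : ℝ} (hb : ∀ a, ‖h a‖ ≤ C) :
    Integrable (fun a => g a * h a) μ :=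
  (hg.bdd_mul hm (Filter.Eventually.of_forall hb)).congr (Filter.Eventually.of_forall fun a => mul_comm _ _)

private lemma exp_conj_helper (a b : ℝ) :
    conj (Complex.exp (-2 * (π : ℂ) * Complex.I * a * b))
      = Complex.exp (2 * (π : ℂ) * Complex.I * a * b) := by
  rw [← Complex.exp_conj]
  congr 1
  simp only [map_mul, map_neg, Complex.conj_I, Complex.conj_ofReal, map_ofNat]
  ring

private theorem key
    {Ω : Type*} [MeasureSpace Ω] [IsProbabilityMeasure (volume : Measure Ω)]
    (x : ℝ × Ω → ℂ) (M : ℝ) (hxmeas : Measurable x)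
    (hbd : ∀ p, ‖x p‖ ≤ M)
    (xhat : ℝ → ℂ)
    (hstat : ∀ t τ : ℝ, (∫ ω : Ω, x (t, ω) * conj (x (t - τ, ω))) = xhat τ)
    (S : ℝ → ℂ) (hS : Integrable S)
    (hinv : ∀ τ : ℝ, xhat τ = ∫ ν : ℝ, S ν * Complex.exp (2 * (π : ℂ) * Complex.I * ν * τ))
    (w : ℝ → ℂ) (hw : Integrable w) (f : ℝ) :
    ((∫ ω : Ω, ‖∫ t : ℝ, w t * x (t, ω) *
        Complex.exp (-2 * (π : ℂ) * Complex.I * f * t)‖ ^ 2 : ℝ) : ℂ)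
      = ∫ f' : ℝ, S (f - f') *
          ((‖∫ t : ℝ, w t * Complex.exp (-2 * (π : ℂ) * Complex.I * f' * t)‖ ^ 2 : ℝ) : ℂ) := by
  -- nonnegative bound
  set A : ℝ := |M| with hAdef
  have hA : ∀ p, ‖x p‖ ≤ A := fun p => (hbd p).trans (le_abs_self M)
  -- modulated window
  set φ : ℝ → ℂ := fun t => w t * Complex.exp (-2 * (π : ℂ) * Complex.I * f * t) with hφdef
  have hφnorm : ∀ t, ‖φ t‖ = ‖w t‖ := by
    intro t; rw [hφdef]; simp only [norm_mul, exp_norm_one, mul_one]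
  have hexpmeas : AEStronglyMeasurable
      (fun t : ℝ => Complex.exp (-2 * (π : ℂ) * Complex.I * f * t)) (volume : Measure ℝ) :=
    (Complex.continuous_exp.comp (by fun_prop)).aestronglyMeasurable
  have hφint : Integrable φ :=
    mul_bdd_int hw hexpmeas (C := 1) (fun t => le_of_eq (exp_norm_one f t))
  have hφmeas : AEStronglyMeasurable φ (volume : Measure ℝ) := hφint.aestronglyMeasurable
  -- windowed transform as a function of ω
  have hxm : ∀ ω : Ω, Measurable fun t : ℝ => x (t, ω) := fun ω =>
    hxmeas.comp (measurable_id.prodMk measurable_const)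
  set z : Ω → ℂ := fun ω => ∫ t : ℝ, φ t * x (t, ω) with hzdef
  have hzeq : ∀ ω : Ω, (∫ t : ℝ, w t * x (t, ω) *
      Complex.exp (-2 * (π : ℂ) * Complex.I * f * t)) = z ω := by
    intro ω; rw [hzdef]; congr 1; funext t; rw [hφdef]; ring
  -- the two-point kernel
  set F : ℝ × ℝ → Ω → ℂ :=
    fun p ω => (φ p.1 * x (p.1, ω)) * conj (φ p.2 * x (p.2, ω)) with hFdef
  set μ2 : Measure (ℝ × ℝ) := (volume : Measure ℝ).prod volume with hμ2def
  have hdom2 : Integrable (fun p : ℝ × ℝ => (‖w p.1‖ * A) * (‖w p.2‖ * A)) μ2 :=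
    (hw.norm.mul_const A).mul_prod (hw.norm.mul_const A)
  have hFint : ∀ ω, Integrable (fun p => F p ω) μ2 := by
    intro ω
    refine hdom2.mono' ?_ ?_
    · refine AEStronglyMeasurable.mul (AEStronglyMeasurable.mul hφmeas.comp_fst ?_) ?_
      · exact (hxmeas.comp (measurable_fst.prodMk measurable_const)).aestronglyMeasurable
      · refine Complex.continuous_conj.comp_aestronglyMeasurable
          (AEStronglyMeasurable.mul hφmeas.comp_snd ?_)
        exact (hxmeas.comp (measurable_snd.prodMk measurable_const)).aestronglyMeasurable
    · refine Filter.Eventually.of_forall fun p => ?_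
      rw [hFdef]
      simp only [norm_mul, RCLike.norm_conj, hφnorm]
      gcongr
      · exact hA _
      · exact hA _
  have hzz : ∀ ω, z ω * conj (z ω) = ∫ p, F p ω ∂μ2 := by
    intro ω
    rw [integral_prod _ (hFint ω)]
    simp only [hFdef]
    simp only [integral_const_mul, integral_conj, integral_mul_const]
    rfl
  -- Fubini over Ω
  have hFub1 : Integrable (Function.uncurry fun (ω : Ω) (p : ℝ × ℝ) => F p ω)
      ((volume : Measure Ω).prod μ2) := by
    have hdom : Integrable (fun q : Ω × (ℝ × ℝ) => (‖w q.2.1‖ * A) * (‖w q.2.2‖ * A))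
        ((volume : Measure Ω).prod μ2) := by
      simpa using (integrable_const (1 : ℝ)).mul_prod hdom2
    refine hdom.mono' ?_ ?_
    · refine AEStronglyMeasurable.mul (AEStronglyMeasurable.mul hφmeas.comp_fst.comp_snd ?_) ?_
      · exact (hxmeas.comp ((measurable_snd.fst).prodMk measurable_fst)).aestronglyMeasurable
      · refine Complex.continuous_conj.comp_aestronglyMeasurable
          (AEStronglyMeasurable.mul hφmeas.comp_snd.comp_snd ?_)
        exact (hxmeas.comp ((measurable_snd.snd).prodMk measurable_fst)).aestronglyMeasurable
    · refine Filter.Eventually.of_forall fun q => ?_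
      simp only [Function.uncurry, hFdef, norm_mul, RCLike.norm_conj, hφnorm]
      gcongr
      · exact hA _
      · exact hA _
  -- the frequency kernel
  set G : ℝ × ℝ → ℝ → ℂ := fun p ν =>
    φ p.1 * conj (φ p.2) * (S ν * Complex.exp (2 * (π : ℂ) * Complex.I * ν * ((p.1 - p.2 : ℝ) : ℂ)))
    with hGdef
  have hinner : ∀ p : ℝ × ℝ, (∫ ω : Ω, F p ω) = ∫ ν : ℝ, G p ν := by
    intro p
    have h1 : ∀ ω : Ω, F p ω
        = (φ p.1 * conj (φ p.2)) * (x (p.1, ω) * conj (x (p.1 - (p.1 - p.2), ω))) := by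
      intro ω; rw [sub_sub_cancel, hFdef]; simp only [map_mul]; ring
    simp only [h1]
    rw [integral_const_mul, hstat p.1 (p.1 - p.2), hinv (p.1 - p.2), ← integral_const_mul]
  -- Fubini over frequency
  have hFub2 : Integrable (Function.uncurry G) (μ2.prod volume) := by
    have hdom : Integrable (fun q : (ℝ × ℝ) × ℝ => (‖w q.1.1‖ * ‖w q.1.2‖) * ‖S q.2‖)
        (μ2.prod volume) := (hw.norm.mul_prod hw.norm).mul_prod hS.norm
    refine hdom.mono' ?_ ?_
    · refine AEStronglyMeasurable.mul
        (AEStronglyMeasurable.mul hφmeas.comp_fst.comp_fst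
          (Complex.continuous_conj.comp_aestronglyMeasurable hφmeas.comp_snd.comp_fst))
        (AEStronglyMeasurable.mul hS.aestronglyMeasurable.comp_snd ?_)
      exact (Complex.continuous_exp.comp (by fun_prop)).aestronglyMeasurable
    · refine Filter.Eventually.of_forall fun q => ?_
      simp only [Function.uncurry, hGdef, norm_mul, RCLike.norm_conj, hφnorm,
        exp_norm_one', mul_one]
      exact le_of_eq (by ring)
  -- separate the double integral
  have hsep : ∀ ν : ℝ, (∫ p, G p ν ∂μ2)
      = S ν * ((‖∫ t : ℝ, w t * Complex.exp (-2 * (π : ℂ) * Complex.I * ((f - ν : ℝ) : ℂ) * t)‖ ^ 2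
          : ℝ) : ℂ) := by
    intro ν
    have hsepG : ∀ p : ℝ × ℝ, G p ν =
        S ν * ((w p.1 * Complex.exp (-2 * (π : ℂ) * Complex.I * ((f - ν : ℝ) : ℂ) * p.1)) *
          conj (w p.2 * Complex.exp (-2 * (π : ℂ) * Complex.I * ((f - ν : ℝ) : ℂ) * p.2))) := by
      intro p
      have hexp : Complex.exp (-2 * (π : ℂ) * Complex.I * f * p.1) *
            Complex.exp (2 * (π : ℂ) * Complex.I * f * p.2) *
            Complex.exp (2 * (π : ℂ) * Complex.I * ν * ((p.1 - p.2 : ℝ) : ℂ))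
          = Complex.exp (-2 * (π : ℂ) * Complex.I * ((f - ν : ℝ) : ℂ) * p.1) *
            Complex.exp (2 * (π : ℂ) * Complex.I * ((f - ν : ℝ) : ℂ) * p.2) := by
        rw [← Complex.exp_add, ← Complex.exp_add, ← Complex.exp_add]
        congr 1
        push_cast
        ring
      rw [hGdef, hφdef]
      simp only [map_mul, exp_conj_helper]
      linear_combination (w p.1 * conj (w p.2) * S ν) * hexp
    simp only [hsepG]
    rw [integral_const_mul, hμ2def,
      integral_prod_mul (f := fun u : ℝ => w u * Complex.exp (-2 * (π : ℂ) * Complex.I *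
        ((f - ν : ℝ) : ℂ) * u))
      (g := fun u : ℝ => conj (w u * Complex.exp (-2 * (π : ℂ) * Complex.I *
        ((f - ν : ℝ) : ℂ) * u))),
      integral_conj, ← hsq]
  -- final assembly
  calc ((∫ ω : Ω, ‖∫ t : ℝ, w t * x (t, ω) *
        Complex.exp (-2 * (π : ℂ) * Complex.I * f * t)‖ ^ 2 : ℝ) : ℂ)
      = ∫ ω : Ω, ((‖z ω‖ ^ 2 : ℝ) : ℂ) := by
        simp only [hzeq]
        exact (integral_ofReal (𝕜 := ℂ)).symm
    _ = ∫ ω : Ω, z ω * conj (z ω) := by simp only [hsq]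
    _ = ∫ ω : Ω, ∫ p, F p ω ∂μ2 := by simp only [hzz]
    _ = ∫ p, (∫ ω : Ω, F p ω) ∂μ2 := integral_integral_swap hFub1
    _ = ∫ p, (∫ ν : ℝ, G p ν) ∂μ2 := by simp only [hinner]
    _ = ∫ ν : ℝ, ∫ p, G p ν ∂μ2 := integral_integral_swap hFub2
    _ = ∫ ν : ℝ, S ν * ((‖∫ t : ℝ, w t *
          Complex.exp (-2 * (π : ℂ) * Complex.I * ((f - ν : ℝ) : ℂ) * t)‖ ^ 2 : ℝ) : ℂ) := by
        simp only [hsep]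
    _ = ∫ f' : ℝ, S (f - f') *
          ((‖∫ t : ℝ, w t * Complex.exp (-2 * (π : ℂ) * Complex.I * f' * t)‖ ^ 2 : ℝ) : ℂ) := by
        rw [← integral_sub_left_eq_self (fun ν : ℝ => S ν * ((‖∫ t : ℝ, w t *
          Complex.exp (-2 * (π : ℂ) * Complex.I * ((f - ν : ℝ) : ℂ) * t)‖ ^ 2 : ℝ) : ℂ))
          (volume : Measure ℝ) f]
        congr 1; funext f'; rw [sub_sub_cancel]

/-- Wiener–Khinchin for windowed signals: if the bounded, jointly measurable,
second-order stationary process `x` has autocorrelation `x̂` given as the inverse Fourier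
transform of an integrable power spectral density `S`, and `w` is an integrable window
with `|w|` square-integrable, then the expected energy spectral density of the windowed
signal `y(t) = w(t) x(t)` is the convolution of `S` with the energy spectral density
`|W|²` of the window: `E[|Y(f)|²] = ∫ S(f − f′) |W(f′)|² df′`. -/
theorem expected_esd_eq_psd_conv_window_esd
    {Ω : Type*} [MeasureSpace Ω] [IsProbabilityMeasure (volume : Measure Ω)]
    (x : ℝ × Ω → ℂ) (M : ℝ) (hxmeas : Measurable x)
    (hbd : ∀ t : ℝ, ∀ᵐ ω : Ω, ‖x (t, ω)‖ ≤ M)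
    (xhat : ℝ → ℂ)
    (hstat : ∀ t τ : ℝ, (∫ ω : Ω, x (t, ω) * conj (x (t - τ, ω))) = xhat τ)
    (S : ℝ → ℂ) (hS : Integrable S)
    (hinv : ∀ τ : ℝ, xhat τ = ∫ ν : ℝ, S ν * Complex.exp (2 * (π : ℂ) * Complex.I * ν * τ))
    (w : ℝ → ℂ) (hw : Integrable w) (hw2 : Integrable (fun t : ℝ => ‖w t‖ ^ 2))
    (f : ℝ) :
    ((∫ ω : Ω, ‖∫ t : ℝ, w t * x (t, ω) *
        Complex.exp (-2 * (π : ℂ) * Complex.I * f * t)‖ ^ 2 : ℝ) : ℂ)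
      = ∫ f' : ℝ, S (f - f') *
          ((‖∫ t : ℝ, w t * Complex.exp (-2 * (π : ℂ) * Complex.I * f' * t)‖ ^ 2 : ℝ) : ℂ) := by
  classical
  set x' : ℝ × Ω → ℂ := fun p => if ‖x p‖ ≤ M then x p else 0 with hx'def
  have hsetmeas : MeasurableSet {p : ℝ × Ω | ‖x p‖ ≤ M} :=
    measurableSet_le hxmeas.norm measurable_const
  have hx'meas : Measurable x' := Measurable.ite hsetmeas hxmeas measurable_const
  have hx'bd : ∀ p, ‖x' p‖ ≤ max M 0 := by
    intro p
    rw [hx'def]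
    dsimp only
    split
    · exact le_max_of_le_left ‹_›
    · simp
  have hx'ae : ∀ t : ℝ, ∀ᵐ ω : Ω, x' (t, ω) = x (t, ω) := by
    intro t
    filter_upwards [hbd t] with ω h
    rw [hx'def]
    simp only [if_pos h]
  have hstat' : ∀ t τ : ℝ, (∫ ω : Ω, x' (t, ω) * conj (x' (t - τ, ω))) = xhat τ := by
    intro t τ
    rw [← hstat t τ]
    apply integral_congr_ae
    filter_upwards [hx'ae t, hx'ae (t - τ)] with ω h1 h2
    rw [h1, h2]
  have hkey := key x' (max M 0) hx'meas hx'bd xhat hstat' S hS hinv w hw f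
  -- a.e. equality of the windowed transforms
  have hNmeas : MeasurableSet {p : ℝ × Ω | ¬ ‖x p‖ ≤ M} := hsetmeas.compl
  have hN0 : ((volume : Measure ℝ).prod (volume : Measure Ω)) {p : ℝ × Ω | ¬ ‖x p‖ ≤ M} = 0 := by
    rw [Measure.measure_prod_null hNmeas]
    refine Filter.Eventually.of_forall fun t => ?_
    show (volume : Measure Ω) (Prod.mk t ⁻¹' {p : ℝ × Ω | ¬ ‖x p‖ ≤ M}) = 0
    have h := hbd t
    rw [ae_iff] at h
    simpa [Set.preimage_setOf_eq] using h
  have hswapset : (Prod.swap ⁻¹' {p : ℝ × Ω | ¬ ‖x p‖ ≤ M} : Set (Ω × ℝ))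
      = {q : Ω × ℝ | ¬ ‖x (q.2, q.1)‖ ≤ M} := by
    ext q; simp [Prod.swap]
  have hswap : ((volume : Measure Ω).prod (volume : Measure ℝ))
      {q : Ω × ℝ | ¬ ‖x (q.2, q.1)‖ ≤ M} = 0 := by
    rw [← hswapset, ← Measure.prod_swap,
      Measure.map_apply measurable_swap (measurable_swap hNmeas)]
    simpa [Set.preimage_preimage] using hN0
  have hae : ∀ᵐ ω : Ω, ∀ᵐ t : ℝ, ‖x (t, ω)‖ ≤ M := by
    have h := Measure.measure_ae_null_of_prod_null hswap
    filter_upwards [h] with ω hω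
    rw [ae_iff]
    simpa [Set.preimage_setOf_eq] using hω
  have hLHS : (∫ ω : Ω, ‖∫ t : ℝ, w t * x (t, ω) *
        Complex.exp (-2 * (π : ℂ) * Complex.I * f * t)‖ ^ 2 : ℝ)
      = ∫ ω : Ω, ‖∫ t : ℝ, w t * x' (t, ω) *
        Complex.exp (-2 * (π : ℂ) * Complex.I * f * t)‖ ^ 2 := by
    apply integral_congr_ae
    filter_upwards [hae] with ω hω
    have h2 : (∫ t : ℝ, w t * x (t, ω) * Complex.exp (-2 * (π : ℂ) * Complex.I * f * t))
        = ∫ t : ℝ, w t * x' (t, ω) * Complex.exp (-2 * (π : ℂ) * Complex.I * f * t) := by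
      apply integral_congr_ae
      filter_upwards [hω] with t ht
      rw [hx'def]
      simp only [if_pos ht]
    rw [h2]
  rw [hLHS]
  exact hkey
end
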